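/- arXiv:1805.12514 — 5 statements merged into one kernel-verified Lean document; each statement's English description precedes it below -/
import Mathlib

section
/- Let ℓ < 0 < u be real numbers and let S = {(z, ẑ) ∈ ℝ² : ẑ ≥ 0, ẑ ≥ z, −u·z + (u−ℓ)·ẑ ≤ −u·ℓ}. Then for all (z, ẑ) ∈ S and all real μ, ν satisfying μ = (u/(u−ℓ))·ν, we have −z·μ + ẑ·ν ≤ max(0, −(u·ℓ/(u−ℓ))·ν) = −ℓ·max(μ, 0). -/
theorem relu_relaxation_dual_bound (ℓ u : ℝ) (hℓ : ℓ < 0) (hu : 0 < u)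
    (z zhat μ ν : ℝ)
    (hz1 : zhat ≥ 0) (hz2 : zhat ≥ z) (hz3 : -u * z + (u - ℓ) * zhat ≤ -u * ℓ)
    (hμ : μ = (u / (u - ℓ)) * ν) :
    -z * μ + zhat * ν ≤ max 0 (-(u * ℓ / (u - ℓ)) * ν) ∧
      max 0 (-(u * ℓ / (u - ℓ)) * ν) = -ℓ * max μ 0 := by
  have hd : (0:ℝ) < u - ℓ := by linarith
  have hd' : u - ℓ ≠ 0 := ne_of_gt hd
  subst hμ
  constructor
  · rcases le_or_gt 0 ν with h | h
    · refine le_trans ?_ (le_max_right _ _)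
      have h1 : ν / (u - ℓ) * (-u * z + (u - ℓ) * zhat) ≤ ν / (u - ℓ) * (-u * ℓ) :=
        mul_le_mul_of_nonneg_left hz3 (div_nonneg h hd.le)
      calc -z * (u / (u - ℓ) * ν) + zhat * ν
          = ν / (u - ℓ) * (-u * z + (u - ℓ) * zhat) := by field_simp
        _ ≤ ν / (u - ℓ) * (-u * ℓ) := h1
        _ = -(u * ℓ / (u - ℓ)) * ν := by field_simp
    · refine le_trans ?_ (le_max_left _ _)
      have hpos : 0 ≤ -u * z + (u - ℓ) * zhat := by nlinarith
      have h1 : ν / (u - ℓ) * (-u * z + (u - ℓ) * zhat) ≤ 0 :=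
        mul_nonpos_of_nonpos_of_nonneg (div_nonpos_of_nonpos_of_nonneg h.le hd.le) hpos
      calc -z * (u / (u - ℓ) * ν) + zhat * ν
          = ν / (u - ℓ) * (-u * z + (u - ℓ) * zhat) := by field_simp
        _ ≤ 0 := h1
  · have hℓ' : 0 ≤ -ℓ := by linarith
    rw [mul_max_of_nonneg _ _ hℓ', mul_zero, max_comm]
    congr 1
    field_simp
end

section
/- Let u > 1 and ℓ < −1 and let hardtanh(x) = max(−1, min(1, x)). For all z ∈ [ℓ, u], the point (z, hardtanh(z)) satisfies (2/(u+1))·(z+1) − 1 ≤ hardtanh(z) ≤ (2/(1−ℓ))·(z−1) + 1. -/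
theorem hardtanh_parallelogram_bound (ℓ u : ℝ) (hu : 1 < u) (hℓ : ℓ < -1)
    (z : ℝ) (hzl : ℓ ≤ z) (hzu : z ≤ u) :
    (2 / (u + 1)) * (z + 1) - 1 ≤ max (-1) (min 1 z) ∧
      max (-1) (min 1 z) ≤ (2 / (1 - ℓ)) * (z - 1) + 1 := by
  have hu0 : (0:ℝ) < u + 1 := by linarith
  have hl0 : (0:ℝ) < 1 - ℓ := by linarith
  have ha0 : 0 < 2 / (u + 1) := by positivity
  have hb0 : 0 < 2 / (1 - ℓ) := by positivity
  have ha1 : 2 / (u + 1) ≤ 1 := by rw [div_le_one hu0]; linarith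
  have hb1 : 2 / (1 - ℓ) ≤ 1 := by rw [div_le_one hl0]; linarith
  have ha2 : 2 / (u + 1) * (u + 1) = 2 := by field_simp
  have hb2 : 2 / (1 - ℓ) * (1 - ℓ) = 2 := by field_simp
  constructor
  · rcases le_total z (-1) with h | h
    · rw [max_eq_left ((min_le_right 1 z).trans h)]
      nlinarith
    · rcases le_total z 1 with h2 | h2
      · rw [min_eq_right h2, max_eq_right h]
        nlinarith
      · rw [min_eq_left h2, max_eq_right (by linarith)]
        nlinarith
  · rcases le_total z (-1) with h | h
    · rw [max_eq_left ((min_le_right 1 z).trans h)]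
      nlinarith
    · rcases le_total z 1 with h2 | h2
      · rw [min_eq_right h2, max_eq_right h]
        nlinarith
      · rw [min_eq_left h2, max_eq_right (by linarith)]
        nlinarith
end

section
/- Let u = −ℓ > 1 and hardtanh as above. For any reals μ, ν with μ = (2/(1+u))·ν, and any z ∈ [ℓ, u]: −z·μ + hardtanh(z)·ν ≤ |(1 − 2/(1+u))·ν|. -/
theorem hardtanh_symmetric_dual_bound (u : ℝ) (hu : 1 < u) (ℓ : ℝ) (hℓ : ℓ = -u)
    (μ ν : ℝ) (hμ : μ = (2 / (1 + u)) * ν)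
    (z : ℝ) (hzl : ℓ ≤ z) (hzu : z ≤ u) :
    -z * μ + (max (-1) (min 1 z)) * ν ≤ |(1 - 2 / (1 + u)) * ν| := by
  have h1 : (0:ℝ) < 1 + u := by linarith
  set c : ℝ := 2 / (1 + u) with hc
  have hc2 : c * (1 + u) = 2 := by rw [hc]; field_simp
  have hcpos : 0 < c := by positivity
  have hc1 : c < 1 := by rw [hc, div_lt_one h1]; linarith
  have habs : |(1 - c) * ν| = (1 - c) * |ν| := by
    rw [abs_mul, abs_of_nonneg (by linarith)]
  rw [habs, hμ, hℓ] at *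
  rcases abs_cases ν with ⟨he, hs⟩ | ⟨he, hs⟩ <;> rw [he] <;>
    rcases le_total z (-1) with h | h
  · rw [min_eq_right (by linarith), max_eq_left h]
    nlinarith [mul_le_mul_of_nonneg_right (neg_le_neg hzl) hs, hc2]
  · rcases le_total 1 z with h2 | h2
    · rw [min_eq_left h2, max_eq_right (by linarith)]
      nlinarith [mul_nonneg (mul_nonneg hcpos.le hs) (by linarith : (0:ℝ) ≤ z - 1)]
    · rw [min_eq_right h2, max_eq_right h]
      nlinarith [mul_le_mul_of_nonneg_right h2 hs, mul_le_mul_of_nonneg_right (by linarith : -1 ≤ z) hs]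
  · rw [min_eq_right (by linarith), max_eq_left h]
    nlinarith [mul_nonneg (mul_nonneg hcpos.le (by linarith : (0:ℝ) ≤ -ν)) (by linarith : (0:ℝ) ≤ -1 - z)]
  · rcases le_total 1 z with h2 | h2
    · rw [min_eq_left h2, max_eq_right (by linarith)]
      nlinarith [mul_le_mul_of_nonpos_right hzu hs.le, hc2]
    · rw [min_eq_right h2, max_eq_right h]
      nlinarith [mul_le_mul_of_nonpos_right h2 hs.le, mul_le_mul_of_nonpos_right (by linarith : -1 ≤ z) hs.le]
end

section
/- Let χᵢ(z₁,…,zᵢ) be the indicator function that zᵢ = ∑_{j<i} f_{ij}(z_j) (value 0 if the equality holds, +∞ otherwise), for i = 2,…,k. Then for all z₁,…,z_k and all ν₁,…,ν_k: ∑_{i=2}^k χᵢ(z_{1:i}) ≥ ν_kᵀz_k − ν₁ᵀz₁ − ∑_{i=1}^{k−1} χᵢ*(−νᵢ, ν_{i+1:k}), where χᵢ*(ν_{i:k}) = sup_{zᵢ} [νᵢᵀzᵢ + ∑_{j=i+1}^k ν_jᵀ f_{ji}(zᵢ)]. -/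
open Finset in
/-- Lemma 1 of the paper: Fenchel-duality lower bound on the joint indicator of the
network constraints `z i = ∑_{j < i} f i j (z j)` (indices `0,…,k-1`; constraints for
`i ≠ 0`). The conjugates `χᵢ*` are `EReal`-valued suprema. -/
theorem joint_indicator_dual_lower_bound (k : ℕ) (hk : 2 ≤ k)
    (n : Fin k → ℕ)
    (f : ∀ i j : Fin k, (Fin (n j) → ℝ) → (Fin (n i) → ℝ))
    (z ν : ∀ i : Fin k, Fin (n i) → ℝ) :
    (∑ i ∈ univ.filter (fun i : Fin k => i ≠ ⟨0, by omega⟩),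
        (if z i = ∑ j ∈ univ.filter (fun j : Fin k => j < i), f i j (z j)
          then (0 : EReal) else ⊤)) ≥
      ((∑ t, ν ⟨k - 1, by omega⟩ t * z ⟨k - 1, by omega⟩ t : ℝ) : EReal) -
        ((∑ t, ν ⟨0, by omega⟩ t * z ⟨0, by omega⟩ t : ℝ) : EReal) -
        ∑ i ∈ univ.filter (fun i : Fin k => (i : ℕ) + 1 < k),
          ⨆ zi : Fin (n i) → ℝ,
            ((-(∑ t, ν i t * zi t) +
                ∑ j ∈ univ.filter (fun j : Fin k => i < j),
                  ∑ t, ν j t * f j i zi t : ℝ) : EReal) := by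
  by_cases hall : ∀ i ∈ univ.filter (fun i : Fin k => i ≠ ⟨0, by omega⟩),
      z i = ∑ j ∈ univ.filter (fun j : Fin k => j < i), f i j (z j)
  · -- all constraints hold: LHS = 0
    have hL : (∑ i ∈ univ.filter (fun i : Fin k => i ≠ ⟨0, by omega⟩),
        (if z i = ∑ j ∈ univ.filter (fun j : Fin k => j < i), f i j (z j)
          then (0 : EReal) else ⊤)) = 0 :=
      Finset.sum_eq_zero fun i hi => if_pos (hall i hi)
    rw [ge_iff_le, hL]
    set A : Fin k → ℝ := fun i => ∑ t, ν i t * z i t with hA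
    set c : Fin k → ℝ := fun i =>
      -(A i) + ∑ j ∈ univ.filter (fun j : Fin k => i < j), ∑ t, ν j t * f j i (z i) t with hc
    have hsup : ∀ i ∈ univ.filter (fun i : Fin k => (i : ℕ) + 1 < k),
        ((c i : ℝ) : EReal) ≤
          ⨆ zi : Fin (n i) → ℝ,
            ((-(∑ t, ν i t * zi t) +
                ∑ j ∈ univ.filter (fun j : Fin k => i < j),
                  ∑ t, ν j t * f j i zi t : ℝ) : EReal) := by
      intro i _
      exact le_iSup (fun zi : Fin (n i) → ℝ =>
        ((-(∑ t, ν i t * zi t) +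
            ∑ j ∈ univ.filter (fun j : Fin k => i < j),
              ∑ t, ν j t * f j i zi t : ℝ) : EReal)) (z i)
    have hswap :
        ∑ i ∈ univ.filter (fun i : Fin k => (i : ℕ) + 1 < k),
          ∑ j ∈ univ.filter (fun j : Fin k => i < j), ∑ t, ν j t * f j i (z i) t
        = ∑ j : Fin k, ∑ i ∈ univ.filter (fun i : Fin k => i < j),
            ∑ t, ν j t * f j i (z i) t := by
      refine Finset.sum_comm' ?_
      intro i j
      have hj := j.isLt
      simp only [mem_filter, mem_univ, true_and, and_true, Fin.lt_def]
      omega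
    have hinner : ∀ j : Fin k,
        (∑ i ∈ univ.filter (fun i : Fin k => i < j), ∑ t, ν j t * f j i (z i) t)
          = if j = (⟨0, by omega⟩ : Fin k) then 0 else A j := by
      intro j
      by_cases hj : j = (⟨0, by omega⟩ : Fin k)
      · rw [if_pos hj]
        subst hj
        refine Finset.sum_eq_zero fun i hi => ?_
        simp only [mem_filter, Fin.lt_def] at hi
        omega
      · rw [if_neg hj]
        have hz := hall j (by simp [hj])
        rw [Finset.sum_comm]
        refine Finset.sum_congr rfl fun t _ => ?_
        rw [← Finset.mul_sum]
        have : z j t = ∑ i ∈ univ.filter (fun i : Fin k => i < j), f j i (z i) t := by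
          rw [hz]; simp [Finset.sum_apply]
        rw [this]
    have hfilter : univ.filter (fun i : Fin k => (i : ℕ) + 1 < k)
        = univ.erase (⟨k - 1, by omega⟩ : Fin k) := by
      ext i
      simp only [mem_filter, mem_univ, true_and, and_true, mem_erase, ne_eq, Fin.ext_iff,
        Fin.val_mk]
      have := i.isLt
      omega
    have hsumc : ∑ i ∈ univ.filter (fun i : Fin k => (i : ℕ) + 1 < k), c i
        = A ⟨k - 1, by omega⟩ - A ⟨0, by omega⟩ := by
      rw [hc]
      simp only
      rw [Finset.sum_add_distrib, hswap,
        Finset.sum_congr rfl (fun j _ => hinner j)]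
      rw [← Finset.add_sum_erase univ _ (Finset.mem_univ (⟨0, by omega⟩ : Fin k)),
        if_pos rfl, zero_add,
        Finset.sum_congr rfl (fun j hj => if_neg (Finset.mem_erase.mp hj).1)]
      rw [hfilter, Finset.sum_neg_distrib]
      rw [Finset.sum_erase_eq_sub (Finset.mem_univ (⟨0, by omega⟩ : Fin k)),
        Finset.sum_erase_eq_sub (Finset.mem_univ (⟨k - 1, by omega⟩ : Fin k))]
      ring
    -- put the pieces together
    have hcoe : ((A ⟨k - 1, by omega⟩ - A ⟨0, by omega⟩ : ℝ) : EReal)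
        ≤ ∑ i ∈ univ.filter (fun i : Fin k => (i : ℕ) + 1 < k),
            ⨆ zi : Fin (n i) → ℝ,
              ((-(∑ t, ν i t * zi t) +
                  ∑ j ∈ univ.filter (fun j : Fin k => i < j),
                    ∑ t, ν j t * f j i zi t : ℝ) : EReal) := by
      rw [← hsumc]
      calc ((∑ i ∈ univ.filter (fun i : Fin k => (i : ℕ) + 1 < k), c i : ℝ) : EReal)
          = ∑ i ∈ univ.filter (fun i : Fin k => (i : ℕ) + 1 < k), ((c i : ℝ) : EReal) :=
            map_sum (⟨⟨Real.toEReal, EReal.coe_zero⟩, EReal.coe_add⟩ : ℝ →+ EReal) _ _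
        _ ≤ _ := Finset.sum_le_sum hsup
    calc ((A ⟨k - 1, by omega⟩ : ℝ) : EReal) - ((A ⟨0, by omega⟩ : ℝ) : EReal) -
          ∑ i ∈ univ.filter (fun i : Fin k => (i : ℕ) + 1 < k),
            ⨆ zi : Fin (n i) → ℝ,
              ((-(∑ t, ν i t * zi t) +
                  ∑ j ∈ univ.filter (fun j : Fin k => i < j),
                    ∑ t, ν j t * f j i zi t : ℝ) : EReal)
        ≤ ((A ⟨k - 1, by omega⟩ : ℝ) : EReal) - ((A ⟨0, by omega⟩ : ℝ) : EReal) -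
            ((A ⟨k - 1, by omega⟩ - A ⟨0, by omega⟩ : ℝ) : EReal) :=
          EReal.sub_le_sub le_rfl hcoe
      _ = 0 := by
          rw [← EReal.coe_sub, ← EReal.coe_sub]
          norm_cast
          ring
  · -- some constraint fails: LHS = ⊤
    push_neg at hall
    obtain ⟨i, hi, hne⟩ := hall
    have h2 := Finset.single_le_sum (f := fun i : Fin k =>
        (if z i = ∑ j ∈ univ.filter (fun j : Fin k => j < i), f i j (z j)
          then (0 : EReal) else ⊤))
      (fun i _ => by split_ifs <;> simp) hi
    simp only [if_neg hne] at h2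
    exact le_trans le_top h2
end

section
/- Let ℓ ≤ −1 and −1 ≤ u ≤ 1, and hardtanh(x) = max(−1, min(1, x)). For all z ∈ [ℓ, u] and reals μ, ν with μ = ((1+u)/(u−ℓ))·ν: −z·μ + hardtanh(z)·ν ≤ max( −((1+u)/(u−ℓ)·ℓ + 1)·ν, μ − ν ). -/
theorem hardtanh_triangle_dual_bound (ℓ u : ℝ) (hℓ : ℓ ≤ -1) (hu1 : -1 ≤ u) (hu2 : u ≤ 1)
    (z : ℝ) (hzl : ℓ ≤ z) (hzu : z ≤ u)
    (μ ν : ℝ) (hμ : μ = ((1 + u) / (u - ℓ)) * ν) :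
    -z * μ + (max (-1) (min 1 z)) * ν ≤
      max (-(((1 + u) / (u - ℓ)) * ℓ + 1) * ν) (μ - ν) := by
  rcases eq_or_lt_of_le (show u - ℓ ≥ 0 by linarith) with hde | hde
  · -- u = ℓ = -1
    have hu : u = -1 := by linarith
    have hl : ℓ = -1 := by linarith
    have hz : z = -1 := by rw [hu] at hzu; linarith
    subst hu hl hz
    simp [hμ]
  · set s := (1 + u) / (u - ℓ) with hs
    have hs0 : 0 ≤ s := div_nonneg (by linarith) (by linarith)
    have hskey : s * (u - ℓ) = 1 + u := div_mul_cancel₀ _ (by linarith)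
    have hs1 : s ≤ 1 := by
      rw [hs, div_le_one hde]; linarith
    have hh : max (-1) (min 1 z) ≤ 1 ∧ -1 ≤ max (-1) (min 1 z) := by
      constructor
      · apply max_le (by norm_num) (min_le_left _ _)
      · exact le_max_left _ _
    rcases le_total 0 ν with hν | hν
    · -- use left branch : g(z) ≤ -s*ℓ - 1
      have hg : -z * s + max (-1) (min 1 z) ≤ -s * ℓ - 1 := by
        rcases le_total z (-1) with hz1 | hz1
        · have : max (-1) (min 1 z) = -1 := by
            rw [max_eq_left]; exact le_trans (min_le_right _ _) hz1
          rw [this]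
          nlinarith
        · have : max (-1) (min 1 z) = z := by
            rw [min_eq_right (by linarith : z ≤ 1), max_eq_right (by linarith : (-1:ℝ) ≤ z)]
          rw [this]
          nlinarith [mul_nonneg hs0 (show (0:ℝ) ≤ u - z by linarith)]
      refine le_trans ?_ (le_max_left _ _)
      rw [hμ]
      have := mul_le_mul_of_nonneg_right hg hν
      nlinarith
    · -- use right branch : g(z) ≥ s - 1
      have hg : s - 1 ≤ -z * s + max (-1) (min 1 z) := by
        rcases le_total z (-1) with hz1 | hz1
        · have : max (-1) (min 1 z) = -1 := by
            rw [max_eq_left]; exact le_trans (min_le_right _ _) hz1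
          rw [this]
          nlinarith
        · have : max (-1) (min 1 z) = z := by
            rw [min_eq_right (by linarith : z ≤ 1), max_eq_right (by linarith : (-1:ℝ) ≤ z)]
          rw [this]
          nlinarith
      refine le_trans ?_ (le_max_right _ _)
      rw [hμ]
      have := mul_le_mul_of_nonpos_right hg hν
      nlinarith
end
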